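/- Let G be the standard Gaussian density, δ ∈ (0,1), ε ∈ (0, δ/8), and define the measure G_{δ,ε} with density (δ/(2ε))·G(x) on ∪_{n∈ℤ}[nδ-ε, nδ+ε] and 0 elsewhere. Then the total mass ‖G_{δ,ε}‖₁ is at least 1/5. -/

import Mathlib

open Real
open MeasureTheory

/-- Standard Gaussian density. -/
noncomputable def stdG (x : ℝ) : ℝ := (Real.sqrt (2 * Real.pi))⁻¹ * Real.exp (-x ^ 2 / 2)

lemma stdG_nonneg (x : ℝ) : 0 ≤ stdG x := by
  unfold stdG
  have := Real.sqrt_nonneg (2 * Real.pi)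
  positivity

lemma stdG_mono {x y : ℝ} (h : x ^ 2 ≤ y ^ 2) : stdG y ≤ stdG x := by
  have hs : 0 < Real.sqrt (2 * Real.pi) := Real.sqrt_pos.2 (by positivity)
  apply mul_le_mul_of_nonneg_left _ (by positivity)
  exact Real.exp_le_exp.2 (by linarith)

lemma stdG_integrable : Integrable stdG := by
  have h : Integrable (fun x : ℝ => Real.exp (-(1/2 : ℝ) * x ^ 2)) :=
    integrable_exp_neg_mul_sq (by norm_num)
  have h2 := h.const_mul (Real.sqrt (2 * Real.pi))⁻¹
  refine h2.congr (Filter.Eventually.of_forall fun x => ?_)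
  simp only [stdG]
  ring_nf

lemma stdG_numeric : (1:ℝ)/5 ≤ stdG (9/8) := by
  have hpi : 0 < Real.pi := Real.pi_pos
  have hexp : (943:ℝ)/1024 ≤ Real.exp (-(81/1024)) := by
    have := Real.add_one_le_exp (-(81/1024 : ℝ))
    linarith
  have hpow : ((943:ℝ)/1024)^16 ≤ Real.exp (-(81/64)) := by
    calc ((943:ℝ)/1024)^16 ≤ (Real.exp (-(81/1024)))^16 := by
          exact pow_le_pow_left₀ (by norm_num) hexp 16
      _ = Real.exp (-(81/64)) := by
          rw [← Real.exp_nat_mul]; norm_num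
  have h2pi : 2 * Real.pi ≤ 25 * Real.exp (-(81/64)) := by
    have hp : Real.pi < 3.15 := Real.pi_lt_d2
    nlinarith [hpow]
  have hsq : 25 * Real.exp (-(81/64)) = (5 * Real.exp (-(81/128)))^2 := by
    rw [mul_pow, ← Real.exp_nat_mul]
    · norm_num
  have hsqrt : Real.sqrt (2 * Real.pi) ≤ 5 * Real.exp (-(81/128)) := by
    rw [hsq] at h2pi
    calc Real.sqrt (2 * Real.pi) ≤ Real.sqrt ((5 * Real.exp (-(81/128)))^2) :=
          Real.sqrt_le_sqrt h2pi
      _ = 5 * Real.exp (-(81/128)) := Real.sqrt_sq (by positivity)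
  have hs : 0 < Real.sqrt (2 * Real.pi) := Real.sqrt_pos.2 (by positivity)
  have h : (1:ℝ)/5 ≤ (Real.sqrt (2 * Real.pi))⁻¹ * Real.exp (-(81/128)) := by
    rw [inv_mul_eq_div, le_div_iff₀ hs]
    linarith
  calc (1:ℝ)/5 ≤ (Real.sqrt (2 * Real.pi))⁻¹ * Real.exp (-(81/128)) := h
    _ = stdG (9/8) := by norm_num [stdG]


open Classical in
/-- The density of the measure G_{δ,ε}. -/
noncomputable def Gde (δ ε x : ℝ) : ℝ :=
  if ∃ n : ℤ, |x - n * δ| ≤ ε then (δ / (2 * ε)) * stdG x else 0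

/-- The total mass of G_{δ,ε} is at least 1/5. -/
theorem Gde_total_mass_ge (δ ε : ℝ) (hδ0 : 0 < δ) (hδ1 : δ < 1)
    (hε0 : 0 < ε) (hε : ε < δ / 8) :
    1 / 5 ≤ ∫ x, Gde δ ε x := by
  classical
  set c := δ / (2 * ε) with hc_def
  have hc : 0 < c := by positivity
  have h2ε : 2 * ε < δ := by linarith
  set S : Set ℝ := {x | ∃ n : ℤ, |x - (n : ℝ) * δ| ≤ ε} with hS_def
  have hSm : MeasurableSet S := by
    have hSeq : S = ⋃ n : ℤ, Metric.closedBall ((n : ℝ) * δ) ε := by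
      ext x
      simp [hS_def, Metric.mem_closedBall, Real.dist_eq]
    rw [hSeq]
    exact MeasurableSet.iUnion fun n => measurableSet_closedBall
  have hGde : Gde δ ε = S.indicator (fun x => c * stdG x) := by
    funext x
    simp [Gde, Set.indicator_apply, hS_def, Set.mem_setOf_eq, hc_def]
  have hint : Integrable (fun x : ℝ => c * stdG x) := stdG_integrable.const_mul c
  have hnonneg : ∀ x, 0 ≤ c * stdG x := fun x => mul_nonneg hc.le (stdG_nonneg x)
  rw [hGde, MeasureTheory.integral_indicator hSm]
  set N : ℕ := ⌈(9/8 : ℝ) / δ⌉₊ with hN_def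
  have hN : (9:ℝ)/8 ≤ (N : ℝ) * δ := by
    have h1 := Nat.le_ceil ((9/8 : ℝ) / δ)
    rw [div_le_iff₀ hδ0] at h1
    exact h1
  set A : ℕ → Set ℝ := fun n => Set.Icc ((n:ℝ) * δ - ε) ((n:ℝ) * δ + ε) with hA_def
  set a : ℕ → ℝ := fun n => (n:ℝ) * δ + ε with ha_def
  -- restrict to finite union
  have hsub : (⋃ n ∈ Finset.range N, A n) ⊆ S := by
    intro x hx
    simp only [Set.mem_iUnion] at hx
    obtain ⟨n, _, hx⟩ := hx
    rw [hA_def, Set.mem_Icc] at hx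
    refine ⟨(n : ℤ), ?_⟩
    rw [abs_le]
    push_cast
    constructor <;> linarith [hx.1, hx.2]
  have step1 : (∫ x in (⋃ n ∈ Finset.range N, A n), c * stdG x) ≤ ∫ x in S, c * stdG x := by
    apply MeasureTheory.setIntegral_mono_set hint.integrableOn
    · exact Filter.Eventually.of_forall hnonneg
    · exact HasSubset.Subset.eventuallyLE hsub
  have hdisj : Set.Pairwise ↑(Finset.range N) (Function.onFun Disjoint A) := by
    have key : ∀ m n : ℕ, m < n → Disjoint (A m) (A n) := by
      intro m n h
      apply Set.disjoint_left.2
      intro x hx1 hx2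
      simp only [hA_def, Set.mem_Icc] at hx1 hx2
      have hcast : (m:ℝ) + 1 ≤ (n:ℝ) := by exact_mod_cast h
      have hmul : ((m:ℝ) + 1) * δ ≤ (n:ℝ) * δ := mul_le_mul_of_nonneg_right hcast hδ0.le
      linarith [hx1.2, hx2.1]
    intro m _ n _ hmn
    rcases lt_or_gt_of_ne hmn with h | h
    · exact key m n h
    · exact (key n m h).symm
  have step2 : (∫ x in (⋃ n ∈ Finset.range N, A n), c * stdG x)
      = ∑ n ∈ Finset.range N, ∫ x in A n, c * stdG x :=
    MeasureTheory.integral_biUnion_finset (Finset.range N) (fun i _ => measurableSet_Icc) hdisj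
      (fun i _ => hint.integrableOn)
  have step3 : ∀ n : ℕ, (∫ x in Set.Icc (a n) (a (n+1)), stdG x) ≤ ∫ x in A n, c * stdG x := by
    intro n
    have h0n : (0:ℝ) ≤ (n:ℝ) * δ := by positivity
    have han : 0 < a n := by rw [ha_def]; positivity
    have hvol : (volume (A n)).toReal = 2 * ε := by
      rw [hA_def]
      simp only [Real.volume_Icc]
      rw [show (n:ℝ) * δ + ε - ((n:ℝ) * δ - ε) = 2 * ε by ring, ENNReal.toReal_ofReal (by linarith)]
    have hmid : c * stdG (a n) * (2 * ε) ≤ ∫ x in A n, c * stdG x := by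
      rw [← hvol]
      apply MeasureTheory.setIntegral_ge_of_const_le_real measurableSet_Icc
        (measure_Icc_lt_top).ne ?_ hint.integrableOn
      intro x hx
      rw [Set.mem_Icc] at hx
      have hxsq : x ^ 2 ≤ (a n) ^ 2 := by
        apply sq_le_sq'
        · rw [ha_def]; dsimp only; linarith [hx.1]
        · rw [ha_def]; dsimp only; linarith [hx.2]
      exact mul_le_mul_of_nonneg_left (stdG_mono hxsq) hc.le
    have hup : (∫ x in Set.Icc (a n) (a (n+1)), stdG x) ≤ δ * stdG (a n) := by
      have h1 : (∫ x in Set.Icc (a n) (a (n+1)), stdG x)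
          ≤ ∫ _x in Set.Icc (a n) (a (n+1)), stdG (a n) := by
        apply MeasureTheory.setIntegral_mono_on stdG_integrable.integrableOn
          (integrableOn_const measure_Icc_lt_top.ne) measurableSet_Icc
        intro x hx
        rw [Set.mem_Icc] at hx
        exact stdG_mono (pow_le_pow_left₀ han.le hx.1 2)
      rw [MeasureTheory.setIntegral_const, measureReal_def, Real.volume_Icc] at h1
      have hstep : a (n+1) - a n = δ := by rw [ha_def]; push_cast; ring
      rw [hstep, ENNReal.toReal_ofReal hδ0.le, smul_eq_mul] at h1
      exact h1
    have hmeq : c * stdG (a n) * (2 * ε) = δ * stdG (a n) := by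
      rw [hc_def]
      field_simp
    linarith [hmid, hup, hmeq ▸ hmid]
  have step4 : ∑ n ∈ Finset.range N, (∫ x in Set.Icc (a n) (a (n+1)), stdG x)
      ≤ ∑ n ∈ Finset.range N, ∫ x in A n, c * stdG x :=
    Finset.sum_le_sum fun n _ => step3 n
  have hIcc_eq : ∀ n : ℕ, (∫ x in Set.Icc (a n) (a (n+1)), stdG x)
      = ∫ x in (a n)..(a (n+1)), stdG x := by
    intro n
    have hle : a n ≤ a (n+1) := by
      rw [ha_def]; dsimp only; push_cast; nlinarith
    rw [intervalIntegral.integral_of_le hle, MeasureTheory.integral_Icc_eq_integral_Ioc]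
  have step5 : ∑ n ∈ Finset.range N, ∫ x in (a n)..(a (n+1)), stdG x
      = ∫ x in (a 0)..(a N), stdG x :=
    intervalIntegral.sum_integral_adjacent_intervals fun k _ => stdG_integrable.intervalIntegrable
  have ha0 : a 0 = ε := by rw [ha_def]; norm_num
  have haN : a N = (N:ℝ) * δ + ε := by rw [ha_def]
  have haNle : a 0 ≤ a N := by rw [ha0, haN]; nlinarith
  have step6 : (∫ x in Set.Icc (1/8 : ℝ) (9/8), stdG x) ≤ ∫ x in (a 0)..(a N), stdG x := by
    rw [intervalIntegral.integral_of_le haNle]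
    apply MeasureTheory.setIntegral_mono_set stdG_integrable.integrableOn
      (Filter.Eventually.of_forall stdG_nonneg)
    apply HasSubset.Subset.eventuallyLE
    intro x hx
    rw [Set.mem_Icc] at hx
    rw [Set.mem_Ioc, ha0, haN]
    constructor
    · linarith [hx.1]
    · linarith [hx.2, hN]
  have step7 : (1:ℝ)/5 ≤ ∫ x in Set.Icc (1/8 : ℝ) (9/8), stdG x := by
    have h1 : stdG (9/8) * (volume (Set.Icc (1/8 : ℝ) (9/8))).toReal
        ≤ ∫ x in Set.Icc (1/8 : ℝ) (9/8), stdG x := by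
      apply MeasureTheory.setIntegral_ge_of_const_le_real measurableSet_Icc
        (measure_Icc_lt_top).ne ?_ stdG_integrable.integrableOn
      intro x hx
      rw [Set.mem_Icc] at hx
      exact stdG_mono (pow_le_pow_left₀ (by linarith [hx.1]) hx.2 2)
    rw [Real.volume_Icc, show (9/8 : ℝ) - 1/8 = 1 by norm_num, ENNReal.toReal_ofReal zero_le_one,
      mul_one] at h1
    linarith [stdG_numeric]
  calc (1:ℝ)/5 ≤ ∫ x in Set.Icc (1/8 : ℝ) (9/8), stdG x := step7
    _ ≤ ∫ x in (a 0)..(a N), stdG x := step6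
    _ = ∑ n ∈ Finset.range N, ∫ x in (a n)..(a (n+1)), stdG x := step5.symm
    _ = ∑ n ∈ Finset.range N, (∫ x in Set.Icc (a n) (a (n+1)), stdG x) := by
        exact Finset.sum_congr rfl fun n _ => (hIcc_eq n).symm
    _ ≤ ∑ n ∈ Finset.range N, ∫ x in A n, c * stdG x := step4
    _ = ∫ x in (⋃ n ∈ Finset.range N, A n), c * stdG x := step2.symm
    _ ≤ ∫ x in S, c * stdG x := step1
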